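/- Let C11, C12, C21, C22 be complex numbers satisfying C12·conj(C11) = C11·conj(C12), C21·conj(C22) = C22·conj(C21), and C11·conj(C22) − C12·conj(C21) = 1. Then there exist a real number θ and real numbers a, b, c, d with a·d − b·c = 1 such that C11 = e^{iθ}·a, C12 = e^{iθ}·b, C21 = e^{iθ}·c, and C22 = e^{iθ}·d. -/

import Mathlib

open Complex

/-- If `z * conj w` is self-conjugate, then `z` and `w` share a common phase. -/
lemma phase_pair (z w : ℂ) (h : z * (starRingEnd ℂ) w = w * (starRingEnd ℂ) z) :
    ∃ (θ a b : ℝ), z = Complex.exp (θ * Complex.I) * a ∧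
      w = Complex.exp (θ * Complex.I) * b := by
  by_cases hz : z = 0
  · refine ⟨w.arg, 0, ‖w‖, by simp [hz], ?_⟩
    rw [mul_comm]
    exact (Complex.norm_mul_exp_arg_mul_I w).symm
  · set r : ℂ := z * (starRingEnd ℂ) w with hr
    have hrreal : (starRingEnd ℂ) r = r := by
      rw [hr, map_mul, Complex.conj_conj, mul_comm, ← h]
    have him : r.im = 0 := Complex.conj_eq_iff_im.mp hrreal
    refine ⟨z.arg, ‖z‖, r.re / ‖z‖, ?_, ?_⟩
    · rw [mul_comm]; exact (Complex.norm_mul_exp_arg_mul_I z).symm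
    · have hz' : (starRingEnd ℂ) z ≠ 0 := by simpa using hz
      apply mul_right_cancel₀ hz'
      have h1 : w * (starRingEnd ℂ) z = r := h.symm
      rw [h1]
      have habs : (‖z‖ : ℂ) ≠ 0 := by
        simpa using (norm_ne_zero_iff.mpr hz)
      have hconjz : (starRingEnd ℂ) z =
          Complex.exp (-(z.arg * Complex.I)) * (‖z‖ : ℂ) := by
        conv_lhs => rw [← Complex.norm_mul_exp_arg_mul_I z]
        rw [map_mul, ← Complex.exp_conj]
        simp [Complex.conj_I, mul_comm]
      rw [hconjz]
      have hre : (r.re : ℂ) = r := by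
        conv_rhs => rw [← Complex.re_add_im r]
        rw [him]
        simp
      rw [← hre]
      have hone : Complex.exp (↑z.arg * Complex.I) * Complex.exp (-(↑z.arg * Complex.I)) = 1 := by
        rw [← Complex.exp_add]; simp
      simp only [Complex.ofReal_re, Complex.ofReal_div]
      field_simp
      linear_combination (-(↑r.re : ℂ)) * hone

/-- The scalar (n = 1) case of the conditions (BC-CC): the entries of the transfer matrix
have the form e^{iθ} times a real matrix of determinant one. -/
theorem scalar_transfer_matrix_form (C11 C12 C21 C22 : ℂ)
    (h1 : C12 * (starRingEnd ℂ) C11 = C11 * (starRingEnd ℂ) C12)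
    (h2 : C21 * (starRingEnd ℂ) C22 = C22 * (starRingEnd ℂ) C21)
    (h3 : C11 * (starRingEnd ℂ) C22 - C12 * (starRingEnd ℂ) C21 = 1) :
    ∃ (θ a b c d : ℝ), a * d - b * c = 1 ∧
      C11 = Complex.exp (θ * Complex.I) * a ∧
      C12 = Complex.exp (θ * Complex.I) * b ∧
      C21 = Complex.exp (θ * Complex.I) * c ∧
      C22 = Complex.exp (θ * Complex.I) * d := by
  obtain ⟨θ, b, a, h12, h11⟩ := phase_pair C12 C11 h1
  obtain ⟨φ, c, d, h21, h22⟩ := phase_pair C21 C22 h2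
  set k : ℝ := a * d - b * c with hk
  set E := Complex.exp (θ * Complex.I) with hE
  set F := Complex.exp (φ * Complex.I) with hF
  have hconjF : (starRingEnd ℂ) F = Complex.exp (-(φ * Complex.I)) := by
    rw [hF, ← Complex.exp_conj, map_mul, Complex.conj_I, Complex.conj_ofReal]
    ring_nf
  -- rewrite h3
  have key : E * Complex.exp (-(φ * Complex.I)) * (k : ℂ) = 1 := by
    rw [← h3, h11, h12, h21, h22]
    rw [map_mul, map_mul, hconjF, Complex.conj_ofReal, Complex.conj_ofReal]
    push_cast [hk]
    ring
  have habsk : |k| = 1 := by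
    have h := congrArg (‖·‖) key
    rw [norm_mul, norm_mul, hE, Complex.norm_exp, Complex.norm_exp, Complex.norm_real,
      norm_one] at h
    simpa using h
  have hkcases : k = 1 ∨ k = -1 := (abs_eq (by norm_num)).mp habsk
  have hk2' : k * k = 1 := by rcases hkcases with h | h <;> rw [h] <;> norm_num
  -- F = E * k
  have hFE : F = E * (k : ℂ) := by
    have hmul : Complex.exp (-(↑φ * Complex.I)) * F = 1 := by
      rw [hF, ← Complex.exp_add]; simp
    calc F = (E * Complex.exp (-(↑φ * Complex.I)) * ↑k) * F := by rw [key, one_mul]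
      _ = E * ↑k * (Complex.exp (-(↑φ * Complex.I)) * F) := by ring
      _ = E * ↑k := by rw [hmul, mul_one]
  refine ⟨θ, a, b, k * c, k * d, ?_, h11, h12, ?_, ?_⟩
  · linear_combination (-k) * hk + hk2'
  · rw [h21, hFE]; push_cast; ring
  · rw [h22, hFE]; push_cast; ring
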